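/- For R > 1 let p₀(x) := ∏_{c ∈ ℤ + 1/2, |c| ≤ R+1} ∏_{i=1}^n (x_i − c), a polynomial of degree at most C(n)·R. Then there is a constant c(n) > 0 such that for every Q ∈ 𝒬_R and every v ∈ ℝ^n, the directed area of Z_{p₀} in Q in direction v is at least c(n)|v|, i.e. ∫_{smooth points of Z_{p₀} in Q} |⟨v, ∇p₀(x)/|∇p₀(x)|⟩| dH^{n-1}(x) ≥ c(n)|v|. -/

import Mathlib

open MeasureTheory
open scoped ENNReal

noncomputable section

abbrev Euc (n : ℕ) : Type := EuclideanSpace ℝ (Fin n)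

def dyadicCube {n : ℕ} (a : Fin n → ℤ) : Set (Euc n) :=
  {x | ∀ i, (a i : ℝ) ≤ x i ∧ x i < (a i : ℝ) + 1}

def polyEval {n : ℕ} (q : MvPolynomial (Fin n) ℝ) (x : Euc n) : ℝ :=
  MvPolynomial.eval (fun i => x i) q

/-- The gradient of a polynomial, as a vector in `ℝ^n`. -/
def polyGrad {n : ℕ} (q : MvPolynomial (Fin n) ℝ) (x : Euc n) : Euc n :=
  (EuclideanSpace.equiv (Fin n) ℝ).symm
    (fun i => MvPolynomial.eval (fun l => x l) (MvPolynomial.pderiv i q))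

/-- The smooth points of the zero set `Z_q`. -/
def smoothZeros {n : ℕ} (q : MvPolynomial (Fin n) ℝ) : Set (Euc n) :=
  {x | polyEval q x = 0 ∧ polyGrad q x ≠ 0}

/-- The directed area (directional surface area) of `Z_q` in `S` in direction `v`:
`∫_{smooth points of Z_q in S} |⟨v, ∇q(x)/|∇q(x)|⟩| dH^{n-1}(x)`. -/
def dirArea {n : ℕ} (q : MvPolynomial (Fin n) ℝ) (S : Set (Euc n)) (v : Euc n) : ℝ≥0∞ :=
  ∫⁻ x in smoothZeros q ∩ S,
    ENNReal.ofReal |(inner ℝ v (‖polyGrad q x‖⁻¹ • polyGrad q x) : ℝ)| ∂ μH[(n : ℝ) - 1]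

/-- The polynomial `p₀(x) = ∏_{c ∈ ℤ+1/2, |c| ≤ R+1} ∏_{i=1}^n (x_i - c)`;
the half-integers `c = k + 1/2` with `|c| ≤ R + 1` are exactly those with
`k ∈ [⌈-R - 3/2⌉, ⌊R + 1/2⌋]`. -/
def gridPoly (n : ℕ) (R : ℝ) : MvPolynomial (Fin n) ℝ :=
  ∏ k ∈ Finset.Icc ⌈-R - 3/2⌉ ⌊R + 1/2⌋,
    ∏ i : Fin n, (MvPolynomial.X i - MvPolynomial.C ((k : ℝ) + 1/2))

/-! ### Auxiliary lemmas -/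

lemma polyGrad_apply {n : ℕ} (q : MvPolynomial (Fin n) ℝ) (x : Euc n) (u : Fin n) :
    polyGrad q x u = MvPolynomial.eval (fun l => x l) (MvPolynomial.pderiv u q) := rfl

lemma pderiv_prod_ne {n : ℕ} {u j : Fin n} (h : u ≠ j) (s : Finset ℤ) (f : ℤ → ℝ) :
    MvPolynomial.pderiv u (∏ k ∈ s, (MvPolynomial.X j - MvPolynomial.C (f k))) = 0 := by
  induction s using Finset.cons_induction with
  | empty => simp
  | cons k s hk ih =>
    rw [Finset.prod_cons, MvPolynomial.pderiv_mul, ih, map_sub,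
      MvPolynomial.pderiv_X_of_ne h.symm, MvPolynomial.pderiv_C]
    simp

lemma coord_le_norm {n : ℕ} (x : EuclideanSpace ℝ (Fin n)) (i : Fin n) : |x i| ≤ ‖x‖ := by
  rw [EuclideanSpace.norm_eq, ← Real.sqrt_sq_eq_abs]
  apply Real.sqrt_le_sqrt
  have := Finset.single_le_sum (f := fun j => ‖x j‖ ^ 2) (fun j _ => sq_nonneg _)
    (Finset.mem_univ i)
  simpa [Real.norm_eq_abs, sq_abs] using this

lemma norm_le_sum_abs {n : ℕ} (v : EuclideanSpace ℝ (Fin n)) : ‖v‖ ≤ ∑ i, |v i| := by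
  rw [EuclideanSpace.norm_eq]
  have h1 : ∑ i, ‖v i‖ ^ 2 ≤ (∑ i, |v i|) ^ 2 := by
    simpa [Real.norm_eq_abs] using
      Finset.sum_sq_le_sq_sum_of_nonneg (s := Finset.univ) (f := fun i => |v i|)
        (fun i _ => abs_nonneg _)
  calc Real.sqrt (∑ i, ‖v i‖ ^ 2) ≤ Real.sqrt ((∑ i, |v i|) ^ 2) := Real.sqrt_le_sqrt h1
    _ = ∑ i, |v i| := Real.sqrt_sq (Finset.sum_nonneg fun i _ => abs_nonneg _)

/-- Isometric embedding of the hyperplane `{x_i = c}`. -/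
def emb {n : ℕ} (i : Fin n) (c : ℝ) (y : EuclideanSpace ℝ {j : Fin n // j ≠ i}) :
    Euc n :=
  WithLp.toLp 2 (fun j => if h : j = i then c else y ⟨j, h⟩)

lemma emb_isometry {n : ℕ} (i : Fin n) (c : ℝ) : Isometry (emb i c) := by
  refine Isometry.of_dist_eq fun y z => ?_
  rw [EuclideanSpace.dist_eq, EuclideanSpace.dist_eq]
  congr 1
  rw [← Finset.add_sum_erase Finset.univ _ (Finset.mem_univ i)]
  have h0 : dist (emb i c y i) (emb i c z i) ^ 2 = 0 := by
    simp [emb]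
  rw [h0, zero_add]
  rw [Finset.sum_subtype (p := fun j => j ≠ i) (Finset.univ.erase i)
    (fun j => by simp [Finset.mem_erase])
    (fun j => dist (emb i c y j) (emb i c z j) ^ 2)]
  refine Finset.sum_congr rfl fun j _ => ?_
  have h1 : emb i c y j = y j := dif_neg j.2
  have h2 : emb i c z j = z j := dif_neg j.2
  rw [h1, h2]

lemma hausdorff_box_ge {ι : Type*} [Fintype ι] (a : ι → ℤ) :
    1 ≤ μH[(Fintype.card ι : ℝ)]
      {y : EuclideanSpace ℝ ι | ∀ j, (a j : ℝ) ≤ y j ∧ y j < (a j : ℝ) + 1} := by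
  set s : Set (EuclideanSpace ℝ ι) := {y | ∀ j, (a j : ℝ) ≤ y j ∧ y j < (a j : ℝ) + 1}
  set s' : Set (ι → ℝ) := Set.univ.pi fun j => Set.Ico ((a j : ℝ)) ((a j : ℝ) + 1)
  have himg : (WithLp.equiv 2 (ι → ℝ)) '' s = s' := by
    ext x
    simp only [Equiv.image_eq_preimage_symm]
    constructor
    · intro hx
      exact fun j _ => hx j
    · intro hx j
      exact hx j (Set.mem_univ j)
  have hvol : volume s' = 1 := by
    rw [volume_pi_pi]
    simp [Real.volume_Ico]
  have hle := (PiLp.lipschitzWith_ofLp 2 (fun _ : ι => ℝ)).hausdorffMeasure_image_le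
    (by positivity : (0:ℝ) ≤ (Fintype.card ι : ℝ)) s
  rw [show (WithLp.ofLp '' s : Set (ι → ℝ)) = s' from himg, hausdorffMeasure_pi_real, hvol] at hle
  simpa using hle

lemma hausdorff_slice_zero {ι : Type*} [Fintype ι] (j : ι) (c : ℝ) :
    μH[(Fintype.card ι : ℝ)] {y : EuclideanSpace ℝ ι | y j = c} = 0 := by
  set s : Set (EuclideanSpace ℝ ι) := {y | y j = c}
  have hle := (PiLp.antilipschitzWith_ofLp 2 (fun _ : ι => ℝ)).le_hausdorffMeasure_image
    (by positivity : (0:ℝ) ≤ (Fintype.card ι : ℝ)) s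
  have himg : (WithLp.equiv 2 (ι → ℝ)) '' s = {f : ι → ℝ | f j = c} := by
    ext x
    simp only [Equiv.image_eq_preimage_symm]
    exact Iff.rfl
  rw [show (WithLp.ofLp '' s : Set (ι → ℝ)) = {f : ι → ℝ | f j = c} from himg, hausdorffMeasure_pi_real] at hle
  have : volume {f : ι → ℝ | f j = c} = 0 := by
    rw [volume_pi]
    exact MeasureTheory.Measure.pi_hyperplane (fun _ : ι => (volume : Measure ℝ)) j c
  rw [this, mul_zero] at hle
  exact le_antisymm hle (zero_le)

/-- The single-variable grid polynomial in variable `j`. -/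
def gpoly (n : ℕ) (I : Finset ℤ) (j : Fin n) : MvPolynomial (Fin n) ℝ :=
  ∏ k ∈ I, (MvPolynomial.X j - MvPolynomial.C ((k : ℝ) + 1/2))

/-- The good part of the `i`-face of the cube `Q_a`. -/
def Sset (n : ℕ) (I : Finset ℤ) (a : Fin n → ℤ) (i : Fin n) : Set (Euc n) :=
  ({x : Euc n | x i = (a i : ℝ) + 1/2} ∩ dyadicCube a) \
    ⋃ (j : Fin n) (_ : j ≠ i) (k : ℤ) (_ : k ∈ I), {x : Euc n | x j = (k : ℝ) + 1/2}

lemma grad_on_S {n : ℕ} (I : Finset ℤ) (a : Fin n → ℤ) (i : Fin n) (hai : a i ∈ I)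
    (x : Euc n) (hx : x ∈ Sset n I a i) :
    ∃ D : ℝ, D ≠ 0 ∧ polyEval (∏ j, gpoly n I j) x = 0 ∧
      polyGrad (∏ j, gpoly n I j) x = EuclideanSpace.single i D := by
  obtain ⟨⟨h1, _h2⟩, h3'⟩ := hx
  have h3 : ∀ j, j ≠ i → ∀ k ∈ I, x j ≠ (k : ℝ) + 1/2 := by
    intro j hj k hk heq
    exact h3' (Set.mem_iUnion.2 ⟨j, Set.mem_iUnion.2 ⟨hj, Set.mem_iUnion.2
      ⟨k, Set.mem_iUnion.2 ⟨hk, heq⟩⟩⟩⟩)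
  set ev : MvPolynomial (Fin n) ℝ →+* ℝ := MvPolynomial.eval (fun l => x l) with hev
  have e_gi : ev (gpoly n I i) = 0 := by
    rw [hev, gpoly, map_prod]
    refine Finset.prod_eq_zero hai ?_
    simp only [map_sub, MvPolynomial.eval_X, MvPolynomial.eval_C]
    rw [show x i = (a i : ℝ) + 1/2 from h1]
    norm_num
  have e_gj : ∀ j, j ≠ i → ev (gpoly n I j) ≠ 0 := by
    intro j hj
    rw [hev, gpoly, map_prod]
    refine Finset.prod_ne_zero_iff.2 fun k hk => ?_
    simp only [map_sub, MvPolynomial.eval_X, MvPolynomial.eval_C]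
    exact sub_ne_zero.2 (h3 j hj k hk)
  set h : MvPolynomial (Fin n) ℝ := ∏ j ∈ Finset.univ.erase i, gpoly n I j with hh
  have hsplit : (∏ j, gpoly n I j) = gpoly n I i * h :=
    (Finset.mul_prod_erase Finset.univ _ (Finset.mem_univ i)).symm
  have e_h : ev h ≠ 0 := by
    rw [hh, map_prod]
    exact Finset.prod_ne_zero_iff.2 fun j hj => e_gj j (Finset.mem_erase.1 hj).1
  have hgsplit : gpoly n I i =
      (MvPolynomial.X i - MvPolynomial.C ((a i : ℝ) + 1/2)) *
        ∏ k ∈ I.erase (a i), (MvPolynomial.X i - MvPolynomial.C ((k : ℝ) + 1/2)) :=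
    (Finset.mul_prod_erase I _ hai).symm
  have e_dgi : ev (MvPolynomial.pderiv i (gpoly n I i)) =
      ∏ k ∈ I.erase (a i), ((a i : ℝ) - k) := by
    rw [hgsplit, MvPolynomial.pderiv_mul]
    rw [map_add, map_mul, map_mul]
    have h4 : MvPolynomial.pderiv i
        (MvPolynomial.X i - MvPolynomial.C ((a i : ℝ) + 1/2)) = 1 := by
      rw [map_sub, MvPolynomial.pderiv_X_self, MvPolynomial.pderiv_C, sub_zero]
    rw [h4, map_one, one_mul]
    have hz : ev (MvPolynomial.X i - MvPolynomial.C ((a i : ℝ) + 1/2)) = 0 := by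
      simp only [hev, map_sub, MvPolynomial.eval_X, MvPolynomial.eval_C]
      rw [show x i = (a i : ℝ) + 1/2 from h1]
      norm_num
    rw [hz, zero_mul, add_zero, map_prod]
    refine Finset.prod_congr rfl fun k hk => ?_
    simp only [map_sub, MvPolynomial.eval_X, MvPolynomial.eval_C, hev]
    rw [show x i = (a i : ℝ) + 1/2 from h1]
    ring
  have e_dgi_ne : ev (MvPolynomial.pderiv i (gpoly n I i)) ≠ 0 := by
    rw [e_dgi]
    refine Finset.prod_ne_zero_iff.2 fun k hk => ?_
    have hki : k ≠ a i := (Finset.mem_erase.1 hk).1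
    exact sub_ne_zero.2 (by exact_mod_cast (hki.symm : a i ≠ k))
  refine ⟨ev (MvPolynomial.pderiv i (gpoly n I i)) * ev h,
    mul_ne_zero e_dgi_ne e_h, ?_, ?_⟩
  · show ev (∏ j, gpoly n I j) = 0
    rw [hsplit, map_mul, e_gi, zero_mul]
  · ext u
    rw [polyGrad_apply, EuclideanSpace.single_apply]
    show ev (MvPolynomial.pderiv u (∏ j, gpoly n I j)) = _
    rw [hsplit, MvPolynomial.pderiv_mul, map_add, map_mul, map_mul, e_gi, zero_mul, add_zero]
    by_cases hu : u = i
    · subst hu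
      rw [if_pos rfl]
    · rw [if_neg hu]
      simp only [gpoly]
      rw [pderiv_prod_ne hu I _, map_zero, zero_mul]

lemma integrand_eq {n : ℕ} (v : Euc n) (i : Fin n) {D : ℝ} (hD : D ≠ 0) :
    |(inner ℝ v (‖(EuclideanSpace.single i D : Euc n)‖⁻¹ •
        (EuclideanSpace.single i D : Euc n)) : ℝ)| = |v i| := by
  rw [real_inner_smul_right, EuclideanSpace.norm_single]
  have h := EuclideanSpace.inner_single_right (𝕜 := ℝ) i D v
  simp only [RCLike.conj_to_real, starRingEnd_apply, star_trivial] at h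
  rw [h, abs_mul, abs_inv, Real.norm_eq_abs, abs_abs, abs_mul]
  field_simp

lemma Sset_measure {n : ℕ} (I : Finset ℤ) (a : Fin n → ℤ) (i : Fin n) :
    1 ≤ μH[(n : ℝ) - 1] (Sset n I a i) := by
  have hn : 1 ≤ n := Nat.one_le_iff_ne_zero.2 (by rintro rfl; exact i.elim0)
  have hcard : ((Fintype.card {j : Fin n // j ≠ i} : ℕ) : ℝ) = (n : ℝ) - 1 := by
    have h : Fintype.card {j : Fin n // j ≠ i} = n - 1 := by
      rw [Fintype.card_subtype_compl, Fintype.card_subtype_eq, Fintype.card_fin]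
    rw [h, Nat.cast_sub hn, Nat.cast_one]
  have hd0 : (0:ℝ) ≤ (n : ℝ) - 1 := by
    have : (1:ℝ) ≤ n := by exact_mod_cast hn
    linarith
  set c : ℝ := (a i : ℝ) + 1/2
  set F : Set (Euc n) := {x : Euc n | x i = c} ∩ dyadicCube a with hF
  set box : Set (EuclideanSpace ℝ {j : Fin n // j ≠ i}) :=
    {y | ∀ j : {j : Fin n // j ≠ i}, ((a j : ℝ)) ≤ y j ∧ y j < (a j : ℝ) + 1} with hbox
  have hvi : ∀ y, emb i c y i = c := fun y => dif_pos rfl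
  have hvj : ∀ y (j : Fin n) (h : j ≠ i), emb i c y j = y ⟨j, h⟩ := fun y j h => dif_neg h
  have himg : emb i c '' box = F := by
    ext x
    constructor
    · rintro ⟨y, hy, rfl⟩
      refine ⟨hvi y, fun j => ?_⟩
      by_cases hj : j = i
      · subst hj
        rw [hvi y]
        constructor
        · simp [c]
        · simp only [c]; linarith
      · rw [hvj y j hj]
        exact hy ⟨j, hj⟩
    · rintro ⟨hx1, hx2⟩
      refine ⟨WithLp.toLp 2 (fun j => x j), fun j => hx2 j, ?_⟩
      ext j
      by_cases hj : j = i
      · subst hj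
        rw [hvi]
        exact hx1.symm
      · rw [hvj _ j hj]
  have hFmeas : 1 ≤ μH[(n : ℝ) - 1] F := by
    rw [← himg, (emb_isometry i c).hausdorffMeasure_image (Or.inl hd0)]
    rw [← hcard]
    exact hausdorff_box_ge (fun j : {j : Fin n // j ≠ i} => a j)
  have hbad : μH[(n : ℝ) - 1] (F ∩
      ⋃ (j : Fin n) (_ : j ≠ i) (k : ℤ) (_ : k ∈ I), {x : Euc n | x j = (k : ℝ) + 1/2}) = 0 := by
    refine measure_mono_null (t := ⋃ (j : Fin n) (hj : j ≠ i) (k : ℤ) (_ : k ∈ I),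
        emb i c '' {y : EuclideanSpace ℝ {j' : Fin n // j' ≠ i} | y ⟨j, hj⟩ = (k : ℝ) + 1/2})
      ?_ ?_
    · rintro x ⟨hxF, hxB⟩
      simp only [Set.mem_iUnion] at hxB ⊢
      obtain ⟨j, hj, k, hk, hxj⟩ := hxB
      refine ⟨j, hj, k, hk, WithLp.toLp 2 (fun j' => x j'), hxj, ?_⟩
      ext j'
      by_cases hj' : j' = i
      · subst hj'
        rw [hvi]
        exact hxF.1.symm
      · rw [hvj _ j' hj']
    · refine measure_iUnion_null fun j => measure_iUnion_null fun hj =>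
        measure_iUnion_null fun k => measure_iUnion_null fun hk => ?_
      rw [(emb_isometry i c).hausdorffMeasure_image (Or.inl hd0), ← hcard]
      exact hausdorff_slice_zero _ _
  calc (1:ℝ≥0∞) ≤ μH[(n : ℝ) - 1] F := hFmeas
    _ = μH[(n : ℝ) - 1] (Sset n I a i) := (measure_diff_null' hbad).symm

lemma Sset_measurable {n : ℕ} (I : Finset ℤ) (a : Fin n → ℤ) (i : Fin n) :
    MeasurableSet (Sset n I a i) := by
  have mcoord : ∀ j : Fin n, Measurable fun x : Euc n => x j := fun j =>
    (EuclideanSpace.proj (𝕜 := ℝ) j).continuous.measurable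
  have h1 : MeasurableSet {x : Euc n | x i = (a i : ℝ) + 1/2} :=
    (mcoord i) (measurableSet_singleton _)
  have h2 : MeasurableSet (dyadicCube a) := by
    have : dyadicCube a = ⋂ j, (fun x : Euc n => x j) ⁻¹' Set.Ico ((a j : ℝ)) ((a j : ℝ) + 1) := by
      ext x
      simp [dyadicCube, Set.mem_iInter, Set.mem_Ico]
    rw [this]
    exact MeasurableSet.iInter fun j => (mcoord j) measurableSet_Ico
  have h3 : MeasurableSet (⋃ (j : Fin n) (_ : j ≠ i) (k : ℤ) (_ : k ∈ I),
      {x : Euc n | x j = (k : ℝ) + 1/2}) :=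
    MeasurableSet.iUnion fun j => MeasurableSet.iUnion fun _ =>
      MeasurableSet.iUnion fun k => MeasurableSet.iUnion fun _ =>
        (mcoord j) (measurableSet_singleton _)
  exact (h1.inter h2).diff h3

/-- **Lower bound for the directed areas of the grid polynomial**
(inequality (2.4) / `eq:p0-normal-measure`): `p₀` has degree `≲ R` and, for every
unit dyadic cube `Q` within distance `R` of the origin and every `v ∈ ℝ^n`, the
directed area of `Z_{p₀}` in `Q` in direction `v` is `≳ |v|`. -/
theorem grid_polynomial_directed_area (n : ℕ) :
    ∃ C c : ℝ, 0 < C ∧ 0 < c ∧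
      ∀ R : ℝ, 1 < R →
        ((gridPoly n R).totalDegree : ℝ) ≤ C * R ∧
        ∀ a : Fin n → ℤ, Metric.infDist 0 (dyadicCube a) ≤ R →
          ∀ v : Euc n,
            ENNReal.ofReal (c * ‖v‖) ≤ dirArea (gridPoly n R) (dyadicCube a) v := by
  refine ⟨5 * (n + 1), 1, by positivity, one_pos, fun R hR => ⟨?_, ?_⟩⟩
  · -- degree bound
    set I := Finset.Icc ⌈-R - 3/2⌉ ⌊R + 1/2⌋ with hI
    have hdeg : (gridPoly n R).totalDegree ≤ I.card * n := by
      rw [gridPoly]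
      have hbound : ∀ k ∈ I,
          (∏ i : Fin n, (MvPolynomial.X i - MvPolynomial.C ((k : ℝ) + 1/2))).totalDegree
            ≤ n := by
        intro k _
        refine (MvPolynomial.totalDegree_finset_prod _ _).trans ?_
        have h1 : ∀ i ∈ (Finset.univ : Finset (Fin n)),
            (MvPolynomial.X i - MvPolynomial.C ((k : ℝ) + 1/2)).totalDegree ≤ 1 := fun i _ =>
          (MvPolynomial.totalDegree_sub_C_le (MvPolynomial.X i) _).trans
            (le_of_eq (MvPolynomial.totalDegree_X i))
        refine le_trans (Finset.sum_le_card_nsmul Finset.univ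
          (fun i => (MvPolynomial.X i - MvPolynomial.C ((k : ℝ) + 1/2)).totalDegree) 1 h1) ?_
        simp
      refine (MvPolynomial.totalDegree_finset_prod _ _).trans ?_
      have h2 := Finset.sum_le_card_nsmul I
        (fun k => (∏ i : Fin n, (MvPolynomial.X i - MvPolynomial.C ((k : ℝ) + 1/2))).totalDegree)
        n hbound
      rwa [smul_eq_mul] at h2
    have hcardR : (I.card : ℝ) ≤ 2 * R + 3 := by
      rw [hI, Int.card_Icc]
      have h1 : ((⌊R + 1/2⌋ : ℤ) : ℝ) ≤ R + 1/2 := Int.floor_le _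
      have h2 : (-R - 3/2 : ℝ) ≤ ((⌈-R - 3/2⌉ : ℤ) : ℝ) := Int.le_ceil _
      have h3 : ((((⌊R + 1/2⌋ + 1 - ⌈-R - 3/2⌉).toNat : ℕ) : ℤ) : ℝ)
          = ((max (⌊R + 1/2⌋ + 1 - ⌈-R - 3/2⌉) 0 : ℤ) : ℝ) := by
        rw [Int.toNat_eq_max]
      rw [show (((⌊R + 1/2⌋ + 1 - ⌈-R - 3/2⌉).toNat : ℕ) : ℝ)
          = ((((⌊R + 1/2⌋ + 1 - ⌈-R - 3/2⌉).toNat : ℕ) : ℤ) : ℝ) by push_cast; ring, h3]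
      rcases max_cases (⌊R + 1/2⌋ + 1 - ⌈-R - 3/2⌉) 0 with ⟨heq, _⟩ | ⟨heq, _⟩ <;>
        rw [heq] <;> push_cast <;> linarith
    calc ((gridPoly n R).totalDegree : ℝ) ≤ (I.card : ℝ) * n := by exact_mod_cast hdeg
      _ ≤ (2 * R + 3) * n := by
          apply mul_le_mul_of_nonneg_right hcardR (by positivity)
      _ ≤ 5 * (n + 1) * R := by nlinarith [Nat.cast_nonneg (α := ℝ) n, hR]
  · -- main bound
    intro a hdist v
    rcases Nat.eq_zero_or_pos n with rfl | hn
    · have hv : v = 0 := Subsingleton.elim v 0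
      simp [hv]
    set I := Finset.Icc ⌈-R - 3/2⌉ ⌊R + 1/2⌋ with hI
    -- each a j lies in I
    have hmem : ∀ j, a j ∈ I := by
      intro j
      have hne : (dyadicCube a).Nonempty := by
        refine ⟨WithLp.toLp 2 (fun j => (a j : ℝ) : Fin n → ℝ), fun j' => ⟨le_refl _, by linarith⟩⟩
      have hlt : Metric.infDist 0 (dyadicCube a) < R + 1/2 := lt_of_le_of_lt hdist (by linarith)
      obtain ⟨y, hy, hdy⟩ := (Metric.infDist_lt_iff hne).1 hlt
      have hyn : ‖y‖ < R + 1/2 := by rwa [dist_zero_left] at hdy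
      have habs : |y j| < R + 1/2 := lt_of_le_of_lt (coord_le_norm y j) hyn
      obtain ⟨hy1, hy2⟩ := abs_lt.1 habs
      obtain ⟨hc1, hc2⟩ := hy j
      rw [hI, Finset.mem_Icc]
      constructor
      · rw [Int.ceil_le]
        push_cast
        linarith
      · rw [Int.le_floor]
        push_cast
        linarith
    have hgrid : gridPoly n R = ∏ j, gpoly n I j := by
      rw [gridPoly, Finset.prod_comm]
      rfl
    set q := gridPoly n R with hq
    set μ := (μH[(n : ℝ) - 1] : Measure (Euc n)) with hμ
    -- the union of the Ssets is inside the integration region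
    have hsub : (⋃ i, Sset n I a i) ⊆ smoothZeros q ∩ dyadicCube a := by
      rintro x hx
      obtain ⟨i, hxi⟩ := Set.mem_iUnion.1 hx
      obtain ⟨D, hD, hval, hgradx⟩ := grad_on_S I a i (hmem i) x hxi
      refine ⟨⟨?_, ?_⟩, hxi.1.2⟩
      · rw [hgrid]; exact hval
      · rw [hgrid, hgradx]
        intro hzero
        apply hD
        have := congrArg norm hzero
        rwa [EuclideanSpace.norm_single, norm_zero, Real.norm_eq_abs, abs_eq_zero] at this
    -- pairwise disjointness
    have hdisj : Pairwise (Function.onFun Disjoint (Sset n I a)) := by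
      intro i i' hii'
      refine Set.disjoint_left.2 fun x hx hx' => ?_
      have h1 : x i' = (a i' : ℝ) + 1/2 := hx'.1.1
      exact hx.2 (Set.mem_iUnion.2 ⟨i', Set.mem_iUnion.2 ⟨hii'.symm, Set.mem_iUnion.2
        ⟨a i', Set.mem_iUnion.2 ⟨hmem i', h1⟩⟩⟩⟩)
    -- the chain of inequalities
    have step1 : ∫⁻ x in ⋃ i, Sset n I a i,
        ENNReal.ofReal |(inner ℝ v (‖polyGrad q x‖⁻¹ • polyGrad q x) : ℝ)| ∂μ
        ≤ dirArea q (dyadicCube a) v := by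
      exact lintegral_mono_set hsub
    have step2 : ∫⁻ x in ⋃ i, Sset n I a i,
        ENNReal.ofReal |(inner ℝ v (‖polyGrad q x‖⁻¹ • polyGrad q x) : ℝ)| ∂μ
        = ∑ i, ∫⁻ x in Sset n I a i,
            ENNReal.ofReal |(inner ℝ v (‖polyGrad q x‖⁻¹ • polyGrad q x) : ℝ)| ∂μ := by
      rw [lintegral_iUnion (fun i => Sset_measurable I a i) hdisj, tsum_fintype]
    have step3 : ∀ i, ENNReal.ofReal |v i|
        ≤ ∫⁻ x in Sset n I a i,
            ENNReal.ofReal |(inner ℝ v (‖polyGrad q x‖⁻¹ • polyGrad q x) : ℝ)| ∂μ := by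
      intro i
      have hpt : ∀ x ∈ Sset n I a i,
          ENNReal.ofReal |v i|
            ≤ ENNReal.ofReal |(inner ℝ v (‖polyGrad q x‖⁻¹ • polyGrad q x) : ℝ)| := by
        intro x hx
        obtain ⟨D, hD, _, hgradx⟩ := grad_on_S I a i (hmem i) x hx
        rw [hgrid, hgradx, integrand_eq v i hD]
      calc ENNReal.ofReal |v i|
          = ENNReal.ofReal |v i| * 1 := (mul_one _).symm
        _ ≤ ENNReal.ofReal |v i| * μ (Sset n I a i) :=
            mul_le_mul_right (Sset_measure I a i) _
        _ = ∫⁻ _x in Sset n I a i, ENNReal.ofReal |v i| ∂μ := (setLIntegral_const _ _).symm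
        _ ≤ _ := by
            refine lintegral_mono_ae ?_
            rw [ae_restrict_iff' (Sset_measurable I a i)]
            exact ae_of_all _ hpt
    have hsum : ENNReal.ofReal (1 * ‖v‖) ≤ ∑ i, ENNReal.ofReal |v i| := by
      rw [one_mul, ← ENNReal.ofReal_sum_of_nonneg (fun i _ => abs_nonneg (v i))]
      exact ENNReal.ofReal_le_ofReal (norm_le_sum_abs v)
    calc ENNReal.ofReal (1 * ‖v‖) ≤ ∑ i, ENNReal.ofReal |v i| := hsum
      _ ≤ ∑ i, ∫⁻ x in Sset n I a i,
            ENNReal.ofReal |(inner ℝ v (‖polyGrad q x‖⁻¹ • polyGrad q x) : ℝ)| ∂μ :=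
          Finset.sum_le_sum fun i _ => step3 i
      _ = ∫⁻ x in ⋃ i, Sset n I a i,
            ENNReal.ofReal |(inner ℝ v (‖polyGrad q x‖⁻¹ • polyGrad q x) : ℝ)| ∂μ := step2.symm
      _ ≤ dirArea q (dyadicCube a) v := step1

end
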